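/- The free Burnside group B(2,3) on two generators of exponent 3 is finite of order 27. -/

import Mathlib

/-- The free Burnside group `B(m, n)`: the quotient of the free group on `m`
generators by the normal closure of the set of `n`-th powers of all its
elements. -/
def BurnsideGroup (m n : ℕ) : Type :=
  PresentedGroup {w : FreeGroup (Fin m) | ∃ x : FreeGroup (Fin m), w = x ^ n}

instance (m n : ℕ) : Group (BurnsideGroup m n) :=
  inferInstanceAs (Group (PresentedGroup _))



@[ext]
structure H3 where
  a : ZMod 3
  b : ZMod 3
  c : ZMod 3
deriving DecidableEq, Fintype

instance : Mul H3 := ⟨fun x y => ⟨x.a + y.a, x.b + y.b, x.c + y.c + x.a * y.b⟩⟩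
instance : One H3 := ⟨⟨0, 0, 0⟩⟩
instance : Inv H3 := ⟨fun x => ⟨-x.a, -x.b, -x.c + x.a * x.b⟩⟩

@[simp] lemma H3.mul_def (x y : H3) : x * y = ⟨x.a + y.a, x.b + y.b, x.c + y.c + x.a * y.b⟩ := rfl
@[simp] lemma H3.one_def : (1 : H3) = ⟨0, 0, 0⟩ := rfl
@[simp] lemma H3.inv_def (x : H3) : x⁻¹ = ⟨-x.a, -x.b, -x.c + x.a * x.b⟩ := rfl

instance : Group H3 where
  mul_assoc x y z := by ext <;> simp <;> ring
  one_mul x := by ext <;> simp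
  mul_one x := by ext <;> simp
  inv_mul_cancel x := by ext <;> simp

theorem H3.exp3 : ∀ h : H3, h ^ 3 = 1 := by decide

theorem H3.card : Nat.card H3 = 27 := by
  rw [Nat.card_eq_fintype_card]; decide

theorem H3.gen : ∀ h : H3, ∃ i j k : Fin 3,
    h = (⟨1,0,0⟩ : H3) ^ (i : ℕ) * (⟨0,1,0⟩ : H3) ^ (j : ℕ) *
      ((⟨1,0,0⟩ : H3)⁻¹ * (⟨0,1,0⟩ : H3)⁻¹ * ⟨1,0,0⟩ * ⟨0,1,0⟩) ^ (k : ℕ) := by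
  decide



namespace B23

def rels : Set (FreeGroup (Fin 2)) := {w : FreeGroup (Fin 2) | ∃ x : FreeGroup (Fin 2), w = x ^ 3}

abbrev B := PresentedGroup rels

theorem exp3 (g : B) : g ^ 3 = 1 := by
  obtain ⟨w, rfl⟩ := PresentedGroup.mk_surjective _ g
  rw [← map_pow]
  show QuotientGroup.mk _ = 1
  refine PresentedGroup.mk_eq_one_iff.mpr ?_
  exact Subgroup.subset_normalClosure ⟨w, rfl⟩

theorem sq (g : B) : g * g = g⁻¹ := by
  have h := exp3 g
  rw [pow_succ, pow_two] at h
  rw [← mul_left_inj g, h, inv_mul_cancel]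

theorem L1 (x y : B) : x * y * x = y⁻¹ * x⁻¹ * y⁻¹ := by
  have h := exp3 (x * y)
  rw [pow_succ, pow_two] at h
  have h2 : x * y * x = (x * y) * (x * y) * (x * y) * (y⁻¹ * x⁻¹ * y⁻¹) := by group
  rw [h2, h, one_mul]

/-- In a group of exponent 3, every element commutes with its conjugates. -/
theorem comm_conj (x y : B) : x * (y⁻¹ * x * y) = (y⁻¹ * x * y) * x := by
  have l : x * y⁻¹ * x = y * x⁻¹ * y := by simpa using L1 x y⁻¹
  have r : x * y * x = y⁻¹ * x⁻¹ * y⁻¹ := L1 x y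
  have hy : y * y = y⁻¹ := sq y
  have hy' : y⁻¹ * y⁻¹ = y := by simpa using sq y⁻¹
  calc x * (y⁻¹ * x * y) = (x * y⁻¹ * x) * y := by group
    _ = y * x⁻¹ * (y * y) := by rw [l]; group
    _ = y * x⁻¹ * y⁻¹ := by rw [hy]
    _ = (y⁻¹ * y⁻¹) * x⁻¹ * y⁻¹ := by rw [hy']
    _ = y⁻¹ * (y⁻¹ * x⁻¹ * y⁻¹) := by group
    _ = y⁻¹ * (x * y * x) := by rw [r]
    _ = (y⁻¹ * x * y) * x := by group

def a : B := PresentedGroup.of 0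
def b : B := PresentedGroup.of 1
def c : B := a⁻¹ * b⁻¹ * a * b

theorem comm_ca : Commute a c := by
  have h : Commute a (b⁻¹ * a * b) := comm_conj a b
  have hc : c = a⁻¹ * (b⁻¹ * a * b) := by unfold c; group
  rw [Commute, SemiconjBy, hc]
  exact ((Commute.refl a).inv_right).mul_right h

theorem comm_cb : Commute b c := by
  have h : Commute b (a⁻¹ * b * a) := comm_conj b a
  have hc : c = (a⁻¹ * b * a)⁻¹ * b := by unfold c; group
  rw [Commute, SemiconjBy, hc]
  exact (h.inv_right).mul_right (Commute.refl b)

theorem ba : b * a = a * b * (c * c) := by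
  have h1 : b * a = a * b * c⁻¹ := by unfold c; group
  rw [h1, sq]

theorem bja (j : ℕ) : b ^ j * a = a * b ^ j * c ^ (2 * j) := by
  induction j with
  | zero => simp
  | succ n ih =>
    have hcb : (c : B) ^ 2 * b ^ n = b ^ n * c ^ 2 := Commute.pow_pow comm_cb.symm 2 n
    calc b ^ (n + 1) * a = b * (b ^ n * a) := by rw [pow_succ']; simp [mul_assoc]
      _ = b * (a * b ^ n * c ^ (2 * n)) := by rw [ih]
      _ = (b * a) * (b ^ n * c ^ (2 * n)) := by simp [mul_assoc]
      _ = (a * b * (c * c)) * (b ^ n * c ^ (2 * n)) := by rw [ba]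
      _ = a * b * ((c ^ 2 * b ^ n) * c ^ (2 * n)) := by rw [pow_two]; simp [mul_assoc]
      _ = a * b * ((b ^ n * c ^ 2) * c ^ (2 * n)) := by rw [hcb]
      _ = a * (b * b ^ n) * (c ^ 2 * c ^ (2 * n)) := by simp [mul_assoc]
      _ = a * b ^ (n + 1) * c ^ (2 * (n + 1)) := by
          rw [← pow_succ', ← pow_add, show 2 + 2 * n = 2 * (n + 1) by ring]

def NF (g : B) : Prop := ∃ i j k : ℕ, g = a ^ i * b ^ j * c ^ k

theorem nf_one : NF 1 := ⟨0, 0, 0, by simp⟩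

theorem nf_mul_a {g : B} (h : NF g) : NF (g * a) := by
  obtain ⟨i, j, k, rfl⟩ := h
  refine ⟨i + 1, j, 2 * j + k, ?_⟩
  have hca : (c : B) ^ k * a = a * c ^ k := (comm_ca.pow_right k).symm
  calc a ^ i * b ^ j * c ^ k * a = a ^ i * b ^ j * (c ^ k * a) := by simp [mul_assoc]
    _ = a ^ i * b ^ j * (a * c ^ k) := by rw [hca]
    _ = a ^ i * (b ^ j * a) * c ^ k := by simp [mul_assoc]
    _ = a ^ i * (a * b ^ j * c ^ (2 * j)) * c ^ k := by rw [bja]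
    _ = (a ^ i * a) * b ^ j * (c ^ (2 * j) * c ^ k) := by simp [mul_assoc]
    _ = a ^ (i + 1) * b ^ j * c ^ (2 * j + k) := by rw [← pow_succ, ← pow_add]

theorem nf_mul_b {g : B} (h : NF g) : NF (g * b) := by
  obtain ⟨i, j, k, rfl⟩ := h
  refine ⟨i, j + 1, k, ?_⟩
  have hcb : (c : B) ^ k * b = b * c ^ k := (comm_cb.pow_right k).symm
  calc a ^ i * b ^ j * c ^ k * b = a ^ i * b ^ j * (c ^ k * b) := by simp [mul_assoc]
    _ = a ^ i * (b ^ j * b) * c ^ k := by rw [hcb]; simp [mul_assoc]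
    _ = a ^ i * b ^ (j + 1) * c ^ k := by rw [← pow_succ]

theorem nf_mul_a_inv {g : B} (h : NF g) : NF (g * a⁻¹) := by
  rw [← sq, ← mul_assoc]; exact nf_mul_a (nf_mul_a h)

theorem nf_mul_b_inv {g : B} (h : NF g) : NF (g * b⁻¹) := by
  rw [← sq, ← mul_assoc]; exact nf_mul_b (nf_mul_b h)

theorem nf_all (g : B) : NF g := by
  obtain ⟨w, rfl⟩ := PresentedGroup.mk_surjective _ g
  rw [← FreeGroup.mk_toWord (x := w)]
  generalize w.toWord = L
  induction L using List.reverseRecOn with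
  | nil =>
    have : FreeGroup.mk ([] : List (Fin 2 × Bool)) = (1 : FreeGroup (Fin 2)) := by
      rw [FreeGroup.one_eq_mk]
    rw [this, map_one]; exact nf_one
  | append_singleton L p ih =>
    obtain ⟨x, bb⟩ := p
    rw [← FreeGroup.mul_mk, map_mul]
    cases bb with
    | true =>
      have hx : FreeGroup.mk [(x, true)] = FreeGroup.of x := rfl
      rw [hx]
      have : (PresentedGroup.mk rels) (FreeGroup.of x) = PresentedGroup.of x := rfl
      rw [this]
      fin_cases x
      · exact nf_mul_a ih
      · exact nf_mul_b ih
    | false =>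
      have hx : FreeGroup.mk [(x, false)] = (FreeGroup.of x)⁻¹ := by
        rw [show (FreeGroup.of x : FreeGroup (Fin 2)) = FreeGroup.mk [(x, true)] from rfl,
          FreeGroup.inv_mk]
        rfl
      rw [hx, map_inv]
      have : (PresentedGroup.mk rels) (FreeGroup.of x) = PresentedGroup.of x := rfl
      rw [this]
      fin_cases x
      · exact nf_mul_a_inv ih
      · exact nf_mul_b_inv ih

def F : Fin 3 × Fin 3 × Fin 3 → B := fun t => a ^ (t.1 : ℕ) * b ^ (t.2.1 : ℕ) * c ^ (t.2.2 : ℕ)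

theorem F_surjective : Function.Surjective F := by
  intro g
  obtain ⟨i, j, k, rfl⟩ := nf_all g
  refine ⟨⟨⟨i % 3, Nat.mod_lt _ (by norm_num)⟩, ⟨j % 3, Nat.mod_lt _ (by norm_num)⟩,
    ⟨k % 3, Nat.mod_lt _ (by norm_num)⟩⟩, ?_⟩
  simp only [F]
  rw [← pow_eq_pow_mod i (exp3 a), ← pow_eq_pow_mod j (exp3 b), ← pow_eq_pow_mod k (exp3 c)]

end B23

namespace B23

def X : H3 := ⟨1, 0, 0⟩
def Y : H3 := ⟨0, 1, 0⟩

def f : Fin 2 → H3 := ![X, Y]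

theorem hrels : ∀ r ∈ rels, FreeGroup.lift f r = 1 := by
  rintro r ⟨x, rfl⟩
  rw [map_pow]
  exact H3.exp3 _

def φ : B →* H3 := PresentedGroup.toGroup hrels

@[simp] theorem φ_a : φ a = X := PresentedGroup.toGroup.of hrels
@[simp] theorem φ_b : φ b = Y := PresentedGroup.toGroup.of hrels

theorem φ_surjective : Function.Surjective φ := by
  intro h
  obtain ⟨i, j, k, hh⟩ := H3.gen h
  refine ⟨a ^ (i : ℕ) * b ^ (j : ℕ) * c ^ (k : ℕ), ?_⟩
  rw [hh]
  simp only [map_mul, map_pow, map_inv, c, φ_a, φ_b, X, Y]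

instance finite_B : Finite B := Finite.of_surjective F F_surjective

theorem card_B : Nat.card B = 27 := by
  have h1 : Nat.card B ≤ 27 := by
    have := Nat.card_le_card_of_surjective F F_surjective
    simpa using this
  have h2 : 27 ≤ Nat.card B := by
    have := Nat.card_le_card_of_surjective φ φ_surjective
    rwa [H3.card] at this
  omega

end B23

theorem burnsideGroup_two_three_finite_card_27 :
    Finite (BurnsideGroup 2 3) ∧ Nat.card (BurnsideGroup 2 3) = 27 :=
  ⟨B23.finite_B, B23.card_B⟩
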